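/- For the φ⁶ model with W(φ) = φ²(φ² − 1)², the transformed potential satisfies V(φ) = 6φ⁴ + 2 on (0, 1), hence V'(φ) = 24φ³ ≥ 0 on (0,1), V' is not identically zero, and the repulsivity condition (φ − 1)·V'(φ) ≤ 0 holds for all φ ∈ (0, 1). -/

import Mathlib

open Real Set

theorem phi6_repulsivity :
    let W : ℝ → ℝ := fun φ => φ ^ 2 * (φ ^ 2 - 1) ^ 2
    let V : ℝ → ℝ := fun φ => (deriv W φ) ^ 2 / W φ - iteratedDeriv 2 W φ
    (∀ φ ∈ Ioo (0 : ℝ) 1, V φ = 6 * φ ^ 4 + 2) ∧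
    (∀ φ ∈ Ioo (0 : ℝ) 1, deriv V φ = 24 * φ ^ 3) ∧
    (∀ φ ∈ Ioo (0 : ℝ) 1, 0 ≤ deriv V φ) ∧
    (∃ φ ∈ Ioo (0 : ℝ) 1, deriv V φ ≠ 0) ∧
    (∀ φ ∈ Ioo (0 : ℝ) 1, (φ - 1) * deriv V φ ≤ 0) := by
  intro W V
  have hW : deriv W = fun x => 6 * x ^ 5 - 8 * x ^ 3 + 2 * x := by
    funext x
    have h1 : HasDerivAt (fun y : ℝ => y ^ 2) (2 * x) x := by
      simpa using hasDerivAt_pow 2 x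
    have h2 : HasDerivAt (fun y : ℝ => (y ^ 2 - 1) ^ 2)
        ((2 : ℕ) * (x ^ 2 - 1) ^ 1 * (2 * x)) x := (h1.sub_const 1).pow 2
    have h3 : HasDerivAt W
        (2 * x * (x ^ 2 - 1) ^ 2 + x ^ 2 * ((2 : ℕ) * (x ^ 2 - 1) ^ 1 * (2 * x))) x :=
      h1.mul h2
    have := h3.deriv
    rw [this]; push_cast; ring
  have hW2 : iteratedDeriv 2 W = fun x => 30 * x ^ 4 - 24 * x ^ 2 + 2 := by
    funext x
    rw [iteratedDeriv_succ, iteratedDeriv_one, hW]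
    have h : HasDerivAt (fun x : ℝ => 6 * x ^ 5 - 8 * x ^ 3 + 2 * x)
        (30 * x ^ 4 - 24 * x ^ 2 + 2) x := by
      have h5 : HasDerivAt (fun y : ℝ => y ^ 5) (5 * x ^ 4) x := by
        simpa using hasDerivAt_pow 5 x
      have h3 : HasDerivAt (fun y : ℝ => y ^ 3) (3 * x ^ 2) x := by
        simpa using hasDerivAt_pow 3 x
      have h1 : HasDerivAt (fun y : ℝ => y) 1 x := hasDerivAt_id x
      have := ((h5.const_mul 6).sub (h3.const_mul 8)).add (h1.const_mul 2)
      exact this.congr_deriv (by ring)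
    exact h.deriv
  have hVeq : ∀ φ ∈ Ioo (0 : ℝ) 1, V φ = 6 * φ ^ 4 + 2 := by
    intro φ hφ
    obtain ⟨h0, h1⟩ := hφ
    have hne : φ ^ 2 * (φ ^ 2 - 1) ^ 2 ≠ 0 := by
      have : φ ^ 2 - 1 ≠ 0 := by nlinarith
      positivity
    show (deriv W φ) ^ 2 / W φ - iteratedDeriv 2 W φ = 6 * φ ^ 4 + 2
    rw [hW, hW2]
    show (6 * φ ^ 5 - 8 * φ ^ 3 + 2 * φ) ^ 2 / (φ ^ 2 * (φ ^ 2 - 1) ^ 2)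
      - (30 * φ ^ 4 - 24 * φ ^ 2 + 2) = 6 * φ ^ 4 + 2
    rw [sub_eq_iff_eq_add, div_eq_iff hne]
    ring
  have hVd : ∀ φ ∈ Ioo (0 : ℝ) 1, deriv V φ = 24 * φ ^ 3 := by
    intro φ hφ
    have heq : V =ᶠ[nhds φ] fun x => 6 * x ^ 4 + 2 := by
      filter_upwards [isOpen_Ioo.mem_nhds hφ] with x hx using hVeq x hx
    rw [heq.deriv_eq]
    have h4 : HasDerivAt (fun x : ℝ => 6 * x ^ 4 + 2) (24 * φ ^ 3) φ := by
      have := ((hasDerivAt_pow 4 φ).const_mul 6).add_const 2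
      exact this.congr_deriv (by push_cast; ring)
    exact h4.deriv
  refine ⟨hVeq, hVd, ?_, ?_, ?_⟩
  · intro φ hφ
    rw [hVd φ hφ]
    have := hφ.1
    positivity
  · refine ⟨1/2, by norm_num, ?_⟩
    rw [hVd (1/2) (by norm_num)]
    norm_num
  · intro φ hφ
    rw [hVd φ hφ]
    nlinarith [hφ.1, hφ.2, pow_pos hφ.1 3]
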